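/- Set Σ_{h,k} := F̄_{(1),k}(Σ⁰_{h,k}) ∪ F̄(Σ⁰_{h,k}). Then the linearized backward flows approximate the exact backward flow at second order on these sets: sup_{k∈ℤ^d} sup_{x∈Σ_{h,k}} ‖B̄_{(1),k}(x) − B̄(x)‖_∞ ≤ (h²/2) (ρ⁰ |F̄|₁)² |B̄|₂. -/

import Mathlib

open scoped NNReal
open Set

/-- Grid node `x⁰_k := h k`. -/
noncomputable def node (d : ℕ) (h : ℝ) (k : Fin d → ℤ) : Fin d → ℝ :=
  fun i => h * (k i : ℝ)

/-- Particle shape function `φ⁰_{h,k}(x) := h^{-d} φ(h⁻¹ x - k)`. -/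
noncomputable def part (d : ℕ) (h : ℝ) (φ : (Fin d → ℝ) → ℝ)
    (k : Fin d → ℤ) (x : Fin d → ℝ) : ℝ :=
  (h ^ d)⁻¹ * φ (fun i => x i / h - (k i : ℝ))

/-- Partial derivative `∂_l g`. -/
noncomputable def pd (d : ℕ) (l : Fin d) (g : (Fin d → ℝ) → ℝ) : (Fin d → ℝ) → ℝ :=
  fun x => fderiv ℝ g x (Pi.single l 1)

/-- Linearized backward flow `B̄_{(1),k}(x) := x⁰_k + J_k⁻¹ (x − F̄(x⁰_k))`. -/
noncomputable def B1 (d : ℕ) (h : ℝ) (F : (Fin d → ℝ) ≃ (Fin d → ℝ))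
    (k : Fin d → ℤ) (x : Fin d → ℝ) : Fin d → ℝ :=
  node d h k +
    fderiv ℝ (F.symm : (Fin d → ℝ) → (Fin d → ℝ)) (F (node d h k)) (x - F (node d h k))

/-- Linearized forward flow `F̄_{(1),k}(x̂) := F̄(x⁰_k) + J_k (x̂ − x⁰_k)`. -/
noncomputable def F1 (d : ℕ) (h : ℝ) (F : (Fin d → ℝ) ≃ (Fin d → ℝ))
    (k : Fin d → ℤ) (y : Fin d → ℝ) : Fin d → ℝ :=
  F (node d h k) +
    fderiv ℝ (F : (Fin d → ℝ) → (Fin d → ℝ)) (node d h k) (y - node d h k)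

/-- Evaluation of a continuous linear functional on `Fin d → ℝ` via partial values. -/
lemma clm_pi_eval {d : ℕ} (L : (Fin d → ℝ) →L[ℝ] ℝ) (w : Fin d → ℝ) :
    L w = ∑ l, w l * L (Pi.single l 1) := by
  have hw : w = ∑ l : Fin d, w l • (Pi.single l 1 : Fin d → ℝ) := by
    funext j
    rw [Finset.sum_apply]
    simp [Pi.single_apply]
  conv_lhs => rw [hw]
  rw [map_sum]
  simp [smul_eq_mul]

lemma clm_pi_abs_le {d : ℕ} (L : (Fin d → ℝ) →L[ℝ] ℝ) (w : Fin d → ℝ) :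
    |L w| ≤ ‖w‖ * ∑ l, |L (Pi.single l 1)| := by
  rw [clm_pi_eval]
  calc |∑ l, w l * L (Pi.single l 1)| ≤ ∑ l, |w l * L (Pi.single l 1)| :=
        Finset.abs_sum_le_sum_abs _ _
    _ ≤ ∑ l, ‖w‖ * |L (Pi.single l 1)| := by
        refine Finset.sum_le_sum fun l _ => ?_
        rw [abs_mul]
        exact mul_le_mul_of_nonneg_right (by simpa using norm_le_pi_norm w l) (abs_nonneg _)
    _ = ‖w‖ * ∑ l, |L (Pi.single l 1)| := by rw [Finset.mul_sum]

theorem linearized_backward_flow_second_order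
    (d : ℕ) (hd : 1 ≤ d) (h : ℝ) (hh : 0 < h)
    (φ : (Fin d → ℝ) → ℝ) (Lφ : ℝ≥0) (hφLip : LipschitzWith Lφ φ)
    (ρ0 : ℝ) (hρ0 : 0 < ρ0) (hφsupp : ∀ x, φ x ≠ 0 → ‖x‖ ≤ ρ0)
    (F : (Fin d → ℝ) ≃ (Fin d → ℝ))
    (hF : ContDiff ℝ 1 (F : (Fin d → ℝ) → (Fin d → ℝ)))
    (hB : ContDiff ℝ 2 (F.symm : (Fin d → ℝ) → (Fin d → ℝ)))
    (cF1 : ℝ) (hcF1 : ∀ (i : Fin d) (x : Fin d → ℝ),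
      ∑ l : Fin d, |pd d l (fun y => F y i) x| ≤ cF1)
    (cB2 : ℝ) (hcB2 : ∀ (i : Fin d) (x : Fin d → ℝ),
      ∑ l1 : Fin d, ∑ l2 : Fin d,
        |pd d l1 (pd d l2 (fun y => F.symm y i)) x| ≤ cB2) :
    ∀ k : Fin d → ℤ,
      ∀ x ∈ (F1 d h F k '' Function.support (part d h φ k)
          ∪ F '' Function.support (part d h φ k)),
        ‖B1 d h F k x - F.symm x‖ ≤ h ^ 2 / 2 * (ρ0 * cF1) ^ 2 * cB2 := by
  intro k x hx
  classical
  have i0 : Fin d := ⟨0, hd⟩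
  have hcF1_0 : 0 ≤ cF1 :=
    le_trans (Finset.sum_nonneg fun l _ => abs_nonneg _) (hcF1 i0 0)
  have hcB2_0 : 0 ≤ cB2 :=
    le_trans (Finset.sum_nonneg fun l1 _ => Finset.sum_nonneg fun l2 _ => abs_nonneg _)
      (hcB2 i0 0)
  have hρcF : 0 ≤ h * ρ0 * cF1 := mul_nonneg (mul_nonneg hh.le hρ0.le) hcF1_0
  have htarget0 : 0 ≤ h ^ 2 / 2 * (ρ0 * cF1) ^ 2 * cB2 :=
    mul_nonneg (mul_nonneg (by positivity) (sq_nonneg _)) hcB2_0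
  have hFdiff : Differentiable ℝ (F : (Fin d → ℝ) → (Fin d → ℝ)) := hF.differentiable one_ne_zero
  have hBdiff : Differentiable ℝ (F.symm : (Fin d → ℝ) → (Fin d → ℝ)) :=
    hB.differentiable (by norm_num)
  have hFi : ∀ i : Fin d, ContDiff ℝ 1 (fun y => F y i) := fun i =>
    (ContinuousLinearMap.proj (R := ℝ) (φ := fun _ : Fin d => ℝ) i).contDiff.comp hF
  have hBi : ∀ i : Fin d, ContDiff ℝ 2 (fun y => F.symm y i) := fun i =>
    (ContinuousLinearMap.proj (R := ℝ) (φ := fun _ : Fin d => ℝ) i).contDiff.comp hB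
  have hcomp : ∀ (G : (Fin d → ℝ) → (Fin d → ℝ)), Differentiable ℝ G →
      ∀ (i : Fin d) (z w : Fin d → ℝ),
        fderiv ℝ (fun y => G y i) z w = (fderiv ℝ G z w) i := by
    intro G hG i z w
    rw [show (fun y => G y i)
        = (ContinuousLinearMap.proj (R := ℝ) (φ := fun _ : Fin d => ℝ) i) ∘ G from rfl,
      (((ContinuousLinearMap.proj (R := ℝ) (φ := fun _ : Fin d => ℝ) i).hasFDerivAt).comp z
        (hG z).hasFDerivAt).fderiv]
    rfl
  -- support estimate
  have hsupp : ∀ y ∈ Function.support (part d h φ k), ‖y - node d h k‖ ≤ h * ρ0 := by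
    intro y hy
    have hφy : φ (fun i => y i / h - (k i : ℝ)) ≠ 0 := fun h0 => hy (by simp [part, h0])
    have h1 := hφsupp _ hφy
    rw [pi_norm_le_iff_of_nonneg (mul_nonneg hh.le hρ0.le)]
    intro i
    have h2 : ‖y i / h - (k i : ℝ)‖ ≤ ρ0 :=
      le_trans (by simpa using norm_le_pi_norm (fun j => y j / h - (k j : ℝ)) i) h1
    have h3 : y i - node d h k i = h * (y i / h - (k i : ℝ)) := by
      simp only [node]
      field_simp
    rw [Pi.sub_apply, h3, norm_mul, Real.norm_eq_abs (h), abs_of_pos hh]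
    exact mul_le_mul_of_nonneg_left h2 hh.le
  -- operator norm bound for the components of F
  have hFi_bound : ∀ (i : Fin d) (z : Fin d → ℝ), ‖fderiv ℝ (fun y => F y i) z‖ ≤ cF1 := by
    intro i z
    refine ContinuousLinearMap.opNorm_le_bound _ hcF1_0 fun w => ?_
    rw [Real.norm_eq_abs]
    calc |fderiv ℝ (fun y => F y i) z w|
        ≤ ‖w‖ * ∑ l, |fderiv ℝ (fun y => F y i) z (Pi.single l 1)| := clm_pi_abs_le _ _
      _ ≤ ‖w‖ * cF1 := mul_le_mul_of_nonneg_left (hcF1 i z) (norm_nonneg _)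
      _ = cF1 * ‖w‖ := mul_comm _ _
  -- the key second-order Taylor estimate
  have key : ∀ x' : Fin d → ℝ, ‖x' - F (node d h k)‖ ≤ h * ρ0 * cF1 →
      ‖B1 d h F k x' - F.symm x'‖ ≤ h ^ 2 / 2 * (ρ0 * cF1) ^ 2 * cB2 := by
    intro x' hx'
    set y0 : Fin d → ℝ := F (node d h k) with hy0
    set v : Fin d → ℝ := x' - y0 with hvdef
    rw [pi_norm_le_iff_of_nonneg htarget0]
    intro i
    have hBidiff : Differentiable ℝ (fun y => F.symm y i) := (hBi i).differentiable (by norm_num)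
    set Ψ : (Fin d → ℝ) → ℝ := fun z => ∑ l2, v l2 * pd d l2 (fun y => F.symm y i) z with hΨdef
    have hpdC1 : ∀ l2 : Fin d, ContDiff ℝ 1 (pd d l2 (fun y => F.symm y i)) := by
      intro l2
      unfold pd
      exact (ContinuousLinearMap.apply ℝ ℝ (Pi.single l2 1)).contDiff.comp
        ((hBi i).fderiv_right (m := 1) (by norm_num))
    have hΨder : ∀ z, HasFDerivAt Ψ
        (∑ l2, v l2 • fderiv ℝ (pd d l2 (fun y => F.symm y i)) z) z := fun z =>
      HasFDerivAt.fun_sum fun l2 _ =>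
        ((((hpdC1 l2).differentiable one_ne_zero) z).hasFDerivAt).const_mul (v l2)
    have hΨbound : ∀ z, ‖fderiv ℝ Ψ z‖ ≤ cB2 * ‖v‖ := by
      intro z
      rw [(hΨder z).fderiv]
      refine ContinuousLinearMap.opNorm_le_bound _
        (mul_nonneg hcB2_0 (norm_nonneg _)) fun w => ?_
      rw [ContinuousLinearMap.sum_apply, Real.norm_eq_abs]
      simp only [ContinuousLinearMap.smul_apply, smul_eq_mul]
      calc |∑ l2, v l2 * fderiv ℝ (pd d l2 (fun y => F.symm y i)) z w|
          ≤ ∑ l2, |v l2 * fderiv ℝ (pd d l2 (fun y => F.symm y i)) z w| :=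
            Finset.abs_sum_le_sum_abs _ _
        _ ≤ ∑ l2, ‖v‖ * (‖w‖ * ∑ l1, |pd d l1 (pd d l2 (fun y => F.symm y i)) z|) := by
            refine Finset.sum_le_sum fun l2 _ => ?_
            rw [abs_mul]
            refine mul_le_mul (by simpa using norm_le_pi_norm v l2)
              (clm_pi_abs_le _ _) (abs_nonneg _) (norm_nonneg _)
        _ = ‖v‖ * ‖w‖ * ∑ l2, ∑ l1, |pd d l1 (pd d l2 (fun y => F.symm y i)) z| := by
            simp only [Finset.mul_sum, mul_assoc]
        _ ≤ ‖v‖ * ‖w‖ * cB2 := by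
            refine mul_le_mul_of_nonneg_left ?_ (mul_nonneg (norm_nonneg _) (norm_nonneg _))
            rw [Finset.sum_comm]
            exact hcB2 i z
        _ = cB2 * ‖v‖ * ‖w‖ := by ring
    have hΨlip : ∀ z, ‖Ψ z - Ψ y0‖ ≤ cB2 * ‖v‖ * ‖z - y0‖ := fun z =>
      convex_univ.norm_image_sub_le_of_norm_fderiv_le (fun u _ => (hΨder u).differentiableAt)
        (fun u _ => hΨbound u) (mem_univ _) (mem_univ _)
    have hΨeq : ∀ z, fderiv ℝ (fun y => F.symm y i) z v = Ψ z := fun z =>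
      clm_pi_eval (fderiv ℝ (fun y => F.symm y i) z) v
    set a : ℝ → ℝ := fun t => (fun y => F.symm y i) (y0 + t • v) - t * Ψ y0 with hadef
    have hderA : ∀ t : ℝ, HasDerivAt a (Ψ (y0 + t • v) - Ψ y0) t := by
      intro t
      have h1 : HasDerivAt (fun t : ℝ => y0 + t • v) v t := by
        simpa using ((hasDerivAt_id t).smul_const v).const_add y0
      have h2 := (hBidiff (y0 + t • v)).hasFDerivAt.comp_hasDerivAt t h1
      rw [hΨeq] at h2
      have h3 : HasDerivAt (fun t : ℝ => t * Ψ y0) (Ψ y0) t := by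
        simpa using (hasDerivAt_id t).mul_const (Ψ y0)
      exact h2.sub h3
    have hΨcont : Continuous Ψ :=
      continuous_finset_sum _ fun l2 _ => continuous_const.mul ((hpdC1 l2).continuous)
    have hFTC : ∫ t in (0:ℝ)..1, (Ψ (y0 + t • v) - Ψ y0) = a 1 - a 0 :=
      intervalIntegral.integral_eq_sub_of_hasDerivAt (fun t _ => hderA t)
        (((hΨcont.comp (continuous_const.add (continuous_id.smul continuous_const))).sub
          continuous_const).intervalIntegrable 0 1)
    have habs : |a 1 - a 0| ≤ cB2 * ‖v‖ ^ 2 / 2 := by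
      rw [← hFTC]
      have hInt : IntervalIntegrable (fun t => cB2 * ‖v‖ ^ 2 * t) MeasureTheory.volume 0 1 :=
        (continuous_const.mul continuous_id).intervalIntegrable 0 1
      have hae : ∀ᵐ t ∂(MeasureTheory.volume.restrict (Set.uIoc (0:ℝ) 1)),
          ‖Ψ (y0 + t • v) - Ψ y0‖ ≤ cB2 * ‖v‖ ^ 2 * t := by
        refine (MeasureTheory.ae_restrict_iff' measurableSet_uIoc).2 (MeasureTheory.ae_of_all _ ?_)
        intro t ht
        rw [Set.uIoc_of_le (by norm_num : (0:ℝ) ≤ 1)] at ht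
        have h1 := hΨlip (y0 + t • v)
        rw [add_sub_cancel_left] at h1
        have h2 : ‖t • v‖ = t * ‖v‖ := by
          rw [norm_smul, Real.norm_eq_abs t, abs_of_pos ht.1]
        rw [h2] at h1
        exact h1.trans (le_of_eq (by ring))
      have h2 := intervalIntegral.norm_integral_le_abs_of_norm_le hae hInt
      refine le_trans h2 ?_
      have hval2 : (∫ t in (0:ℝ)..1, cB2 * ‖v‖ ^ 2 * t) = cB2 * ‖v‖ ^ 2 / 2 := by
        rw [intervalIntegral.integral_const_mul, integral_id]
        ring
      rw [hval2, abs_of_nonneg (div_nonneg (mul_nonneg hcB2_0 (sq_nonneg _)) two_pos.le)]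
    -- identify the quantity
    have h10 : y0 + (1:ℝ) • v = x' := by
      rw [one_smul, hvdef]
      abel
    have h00 : y0 + (0:ℝ) • v = y0 := by rw [zero_smul, add_zero]
    have hBy0 : F.symm y0 i = node d h k i := by rw [hy0, Equiv.symm_apply_apply]
    have hval : (B1 d h F k x' - F.symm x') i = -(a 1 - a 0) := by
      have hB1i : B1 d h F k x' i = node d h k i + Ψ y0 := by
        show node d h k i + (fderiv ℝ (F.symm : (Fin d → ℝ) → (Fin d → ℝ)) y0 (x' - y0)) i = _
        rw [← hvdef, ← hcomp _ hBdiff i y0 v, hΨeq]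
      rw [Pi.sub_apply, hB1i, hadef]
      simp only [h10, h00, one_mul, zero_mul, sub_zero]
      rw [hBy0]
      ring
    rw [Pi.sub_apply] at hval ⊢
    rw [Real.norm_eq_abs, hval, abs_neg]
    refine habs.trans ?_
    have hv2 : ‖v‖ ^ 2 ≤ (h * ρ0 * cF1) ^ 2 := pow_le_pow_left₀ (norm_nonneg _) hx' 2
    nlinarith [hcB2_0]
  -- two cases
  rcases hx with ⟨y, hy, rfl⟩ | ⟨y, hy, rfl⟩
  · apply key
    have hdiff : F1 d h F k y - F (node d h k)
        = fderiv ℝ (F : (Fin d → ℝ) → (Fin d → ℝ)) (node d h k) (y - node d h k) := by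
      unfold F1
      abel
    rw [hdiff, pi_norm_le_iff_of_nonneg hρcF]
    intro i
    rw [Real.norm_eq_abs, ← hcomp _ hFdiff i (node d h k) (y - node d h k)]
    calc |fderiv ℝ (fun y => F y i) (node d h k) (y - node d h k)|
        ≤ ‖fderiv ℝ (fun y => F y i) (node d h k)‖ * ‖y - node d h k‖ :=
          (fderiv ℝ (fun y => F y i) (node d h k)).le_opNorm _
      _ ≤ cF1 * (h * ρ0) := mul_le_mul (hFi_bound i _) (hsupp y hy) (norm_nonneg _) hcF1_0
      _ = h * ρ0 * cF1 := by ring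
  · apply key
    rw [pi_norm_le_iff_of_nonneg hρcF]
    intro i
    rw [Pi.sub_apply]
    have h1 : ‖(fun y => F y i) y - (fun y => F y i) (node d h k)‖
        ≤ cF1 * ‖y - node d h k‖ :=
      convex_univ.norm_image_sub_le_of_norm_fderiv_le (fun z _ => ((hFi i).differentiable one_ne_zero z))
        (fun z _ => hFi_bound i z) (mem_univ _) (mem_univ _)
    refine h1.trans ?_
    calc cF1 * ‖y - node d h k‖ ≤ cF1 * (h * ρ0) :=
          mul_le_mul_of_nonneg_left (hsupp y hy) hcF1_0
      _ = h * ρ0 * cF1 := by ring
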